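/- Let B, C > 0, let q be a probability density on ℝ supported in [−B,B], and let p_T be a probability density on ℝ supported in [−C,C]. Then, as α → 1 from the left, F(α) = (α − 1) · (∫_ℝ ν q(ν) dν) · (∫_ℝ x p_T(x) dx) + o(α − 1); that is, (F(α) − (α−1)·(∫ ν q dν)(∫ x p_T dx))/(α−1) → 0 as α → 1⁻. -/

import Mathlib

set_option maxHeartbeats 1000000


open MeasureTheory Real Filter
open scoped ENNReal Topology

/-- The correction factor `H(α,x) = ∫ ν, exp(-(1/(2α²))((1-α)² ν² - 2(1-α) x ν)) q(ν) dν`. -/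
noncomputable def Hfun (q : ℝ → ℝ) (α x : ℝ) : ℝ :=
  ∫ ν : ℝ, Real.exp (-(1 / (2 * α ^ 2)) * ((1 - α) ^ 2 * ν ^ 2 - 2 * (1 - α) * x * ν)) * q ν

/-- `F(α) = -∫ p_T(x) log H(α,x) dx`. -/
noncomputable def Ffun (q pT : ℝ → ℝ) (α : ℝ) : ℝ :=
  -∫ x : ℝ, pT x * Real.log (Hfun q α x)

lemma log_one_add_near {u : ℝ} (h : |u| ≤ 1/2) : |Real.log (1+u) - u| ≤ 2*u^2 := by
  have h1 : |(-u)| < 1 := by rw [abs_neg]; linarith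
  have h2 := Real.abs_log_sub_add_sum_range_le h1 1
  have h2' : |Real.log (1+u) - u| ≤ |u|^2/(1-|u|) := by
    simpa [Finset.sum_range_one, abs_neg, sub_neg_eq_add, neg_add_eq_sub, sq] using h2
  refine h2'.trans ?_
  have h4 : (0:ℝ) < 1 - |u| := by linarith
  rw [div_le_iff₀ h4]
  nlinarith [sq_nonneg u, abs_nonneg u, sq_abs u]

lemma integrable_of_le_density {g f : ℝ → ℝ} (hg : Integrable g)
    (hf : AEStronglyMeasurable f (volume : Measure ℝ)) (c : ℝ) (h : ∀ x, |f x| ≤ c * g x) :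
    Integrable f := by
  exact (hg.const_mul c).mono' hf (ae_of_all _ fun x => by
    simpa [Real.norm_eq_abs] using h x)

lemma Hfun_measurable (q : ℝ → ℝ) (hq : Measurable q) (α : ℝ) :
    Measurable fun x : ℝ => Hfun q α x := by
  have hf : Measurable fun p : ℝ × ℝ =>
      Real.exp (-(1 / (2 * α ^ 2)) * ((1 - α) ^ 2 * p.2 ^ 2 - 2 * (1 - α) * p.1 * p.2)) * q p.2 := by
    fun_prop
  exact hf.stronglyMeasurable.integral_prod_right'.measurable

lemma auxK3 {a M J D C : ℝ} (ha : 0 < a) (ha1 : a ≤ 1) (hM : 0 ≤ M) :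
    2*a^2*M + 4*a*C*J + (D*a)^2 ≤ (4*C*J + 2*M + D^2) * a := by
  nlinarith [mul_nonneg (mul_nonneg ha.le (by linarith : (0:ℝ) ≤ 1-a)) hM,
    mul_nonneg (mul_nonneg ha.le (by linarith : (0:ℝ) ≤ 1-a)) (sq_nonneg D)]

lemma auxK4 {u a M J D K C : ℝ} (hu2 : u^2 ≤ (K*a)^2) :
    2*u^2 + (2*a^2*M + 8*a^2*C*J + (D*a)^2) ≤ (8*C*J + 2*M + D^2 + 2*K^2)*a^2 := by
  nlinarith [hu2]

lemma aux_c2 {c s M : ℝ} (hc : c ≤ 2) (hs : 0 ≤ s) (hM : 0 ≤ M) : c * s * M ≤ 2*s*M := by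
  nlinarith [mul_le_mul_of_nonneg_right hc (mul_nonneg hs hM)]

lemma aux_alpha {α : ℝ} (h : 1/2 < α) (h1 : α < 1) : (1-α)*(1+α) ≤ 8*(1-α)*α^2 := by
  have hin : (0:ℝ) ≤ 8*α^2 - 1 - α := by nlinarith [sq_nonneg (α-1/2)]
  nlinarith [mul_nonneg (by linarith : (0:ℝ) ≤ 1-α) hin]

/-- If `q` is a probability density supported in `[-B,B]` and `p_T` a probability density
supported in `[-C,C]`, then, as `α → 1⁻`,
`F(α) = (α-1)·(∫ ν q(ν) dν)·(∫ x p_T(x) dx) + o(α-1)`; i.e. the quotient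
`(F(α) - (α-1)·(∫ ν q)(∫ x p_T))/(α-1)` tends to `0`. -/
theorem statement12 (B C : ℝ) (hB : 0 < B) (hC : 0 < C)
    (q : ℝ → ℝ) (hq_meas : Measurable q) (hq_nonneg : ∀ x, 0 ≤ q x)
    (hq_one : ∫ x, q x = 1) (hq_supp : Function.support q ⊆ Set.Icc (-B) B)
    (pT : ℝ → ℝ) (hpT_meas : Measurable pT) (hpT_nonneg : ∀ x, 0 ≤ pT x)
    (hpT_one : ∫ x, pT x = 1) (hpT_supp : Function.support pT ⊆ Set.Icc (-C) C) :
    Tendsto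
      (fun α : ℝ =>
        (Ffun q pT α - (α - 1) * ((∫ ν : ℝ, ν * q ν) * (∫ x : ℝ, x * pT x))) / (α - 1))
      (nhdsWithin 1 (Set.Iio 1)) (nhds 0) := by
  -- basic integrability
  have hq_int : Integrable q := by
    by_contra h
    rw [integral_undef h] at hq_one
    norm_num at hq_one
  have hpT_int : Integrable pT := by
    by_contra h
    rw [integral_undef h] at hpT_one
    norm_num at hpT_one
  have hq_suppB : ∀ ν, q ν ≠ 0 → |ν| ≤ B := fun ν h => by
    have := hq_supp h
    rw [Set.mem_Icc] at this
    exact abs_le.2 this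
  have hpT_suppC : ∀ x, pT x ≠ 0 → |x| ≤ C := fun x h => by
    have := hpT_supp h
    rw [Set.mem_Icc] at this
    exact abs_le.2 this
  have hνq_int : Integrable (fun ν => ν * q ν) := by
    refine integrable_of_le_density hq_int (measurable_id.mul hq_meas).aestronglyMeasurable B ?_
    intro ν
    by_cases h : q ν = 0
    · simp [h, mul_nonneg hB.le (hq_nonneg ν)]
    · rw [abs_mul, abs_of_nonneg (hq_nonneg ν)]
      exact mul_le_mul_of_nonneg_right (hq_suppB ν h) (hq_nonneg ν)
  have hν2q_int : Integrable (fun ν => ν^2 * q ν) := by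
    refine integrable_of_le_density hq_int
      ((measurable_id.pow measurable_const).mul hq_meas).aestronglyMeasurable (B^2) ?_
    intro ν
    by_cases h : q ν = 0
    · simp [h, mul_nonneg (by positivity : (0:ℝ) ≤ B^2) (hq_nonneg ν)]
    · rw [abs_mul, abs_of_nonneg (hq_nonneg ν)]
      refine mul_le_mul_of_nonneg_right ?_ (hq_nonneg ν)
      rw [abs_of_nonneg (sq_nonneg ν)]
      have := abs_le.1 (hq_suppB ν h)
      nlinarith [this.1, this.2]
  have hxpT_int : Integrable (fun x => x * pT x) := by
    refine integrable_of_le_density hpT_int (measurable_id.mul hpT_meas).aestronglyMeasurable C ?_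
    intro x
    by_cases h : pT x = 0
    · simp [h, mul_nonneg hC.le (hpT_nonneg x)]
    · rw [abs_mul, abs_of_nonneg (hpT_nonneg x)]
      exact mul_le_mul_of_nonneg_right (hpT_suppC x h) (hpT_nonneg x)
  set M1 : ℝ := ∫ ν : ℝ, ν * q ν with hM1def
  set P1 : ℝ := ∫ x : ℝ, x * pT x with hP1def
  set M2 : ℝ := ∫ ν : ℝ, ν^2 * q ν with hM2def
  have hM2_nonneg : 0 ≤ M2 :=
    integral_nonneg fun ν => mul_nonneg (sq_nonneg ν) (hq_nonneg ν)
  clear_value M1 P1 M2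
  -- constants
  set D : ℝ := 2*(B^2 + 2*B*C) with hDdef
  have hD : 0 < D := by positivity
  set K3 : ℝ := 4*C*|M1| + 2*M2 + D^2 with hK3def
  have hK3 : 0 ≤ K3 := by positivity
  set K4 : ℝ := 8*C*|M1| + 2*M2 + D^2 + 2*K3^2 with hK4def
  have hK4 : 0 ≤ K4 := by positivity
  set δ : ℝ := min (1/2) (min (1/(D+1)) (1/(2*K3+1))) with hδdef
  have hδpos : 0 < δ := by
    refine lt_min (by norm_num) (lt_min (by positivity) (by positivity))
  -- the key pointwise estimate
  have key : ∀ α : ℝ, 1/2 < α → α < 1 → 1 - α ≤ δ → ∀ x : ℝ, |x| ≤ C →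
      |Real.log (Hfun q α x) - (1-α)*x*M1| ≤ K4 * (1-α)^2 := by
    intro α hαhalf hα1 hαδ x hx
    have hβpos : 0 < 1 - α := by linarith
    have hβ1 : 1 - α ≤ 1 := by linarith
    have hα0 : 0 < α := by linarith
    have hinv : 1/(2*α^2) ≤ 2 := by
      rw [div_le_iff₀ (by positivity)]
      nlinarith
    have hinvpos : 0 < 1/(2*α^2) := by positivity
    have hDβ : D * (1-α) ≤ 1 := by
      have h1 : 1 - α ≤ 1/(D+1) := hαδ.trans ((min_le_right _ _).trans (min_le_left _ _))
      rw [le_div_iff₀ (by positivity)] at h1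
      nlinarith
    have hK3β : K3 * (1-α) ≤ 1/2 := by
      have h1 : 1 - α ≤ 1/(2*K3+1) := hαδ.trans ((min_le_right _ _).trans (min_le_right _ _))
      rw [le_div_iff₀ (by positivity)] at h1
      nlinarith
    set e : ℝ → ℝ := fun ν => -(1 / (2 * α ^ 2)) * ((1 - α) ^ 2 * ν ^ 2 - 2 * (1 - α) * x * ν)
      with hedef
    have he_meas : Measurable e := by rw [hedef]; fun_prop
    have hebound : ∀ ν : ℝ, |ν| ≤ B → |e ν| ≤ D * (1-α) := by
      intro ν hν
      have hν2 : ν^2 ≤ B^2 := by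
        have := abs_le.1 hν
        nlinarith [this.1, this.2]
      have hxν : |x * ν| ≤ C * B := by
        rw [abs_mul]
        exact mul_le_mul hx hν (abs_nonneg _) hC.le
      have habs : |(1 - α) ^ 2 * ν ^ 2 - 2 * (1 - α) * x * ν| ≤ (1-α)*B^2 + 2*(1-α)*(C*B) := by
        refine (abs_sub _ _).trans ?_
        have h1 : |(1 - α) ^ 2 * ν ^ 2| ≤ (1-α)*B^2 := by
          rw [abs_of_nonneg (by positivity)]
          have hs : (1-α)^2 ≤ 1-α := by nlinarith
          calc (1 - α) ^ 2 * ν ^ 2 ≤ (1 - α) ^ 2 * B ^ 2 :=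
                mul_le_mul_of_nonneg_left hν2 (sq_nonneg _)
            _ ≤ (1-α)*B^2 := mul_le_mul_of_nonneg_right hs (sq_nonneg _)
        have h2 : |2 * (1 - α) * x * ν| ≤ 2*(1-α)*(C*B) := by
          have : |2 * (1 - α) * x * ν| = 2*(1-α) * |x * ν| := by
            rw [mul_assoc, abs_mul, abs_of_nonneg (by positivity : (0:ℝ) ≤ 2*(1-α))]
          rw [this]
          exact mul_le_mul_of_nonneg_left hxν (by positivity)
        linarith
      have : |e ν| = (1/(2*α^2)) * |(1 - α) ^ 2 * ν ^ 2 - 2 * (1 - α) * x * ν| := by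
        rw [hedef]
        simp only []
        rw [abs_mul, abs_neg, abs_of_pos hinvpos]
      rw [this]
      calc (1/(2*α^2)) * |(1 - α) ^ 2 * ν ^ 2 - 2 * (1 - α) * x * ν|
          ≤ 2 * ((1-α)*B^2 + 2*(1-α)*(C*B)) :=
            mul_le_mul hinv habs (abs_nonneg _) (by norm_num)
        _ = D * (1-α) := by rw [hDdef]; ring
    -- integrability of the three pieces
    have h_expq : Integrable (fun ν => Real.exp (e ν) * q ν) := by
      refine integrable_of_le_density hq_int (he_meas.exp.mul hq_meas).aestronglyMeasurable
        (Real.exp 1) ?_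
      intro ν
      by_cases h : q ν = 0
      · simp [h, (Real.exp_pos 1).le, mul_nonneg (Real.exp_pos 1).le (hq_nonneg ν)]
      · rw [abs_mul, abs_of_nonneg (hq_nonneg ν), abs_of_pos (Real.exp_pos _)]
        refine mul_le_mul_of_nonneg_right ?_ (hq_nonneg ν)
        refine Real.exp_le_exp.2 ?_
        have := (abs_le.1 (hebound ν (hq_suppB ν h))).2
        linarith [hDβ]
    have h_eq : Integrable (fun ν => e ν * q ν) := by
      refine integrable_of_le_density hq_int (he_meas.mul hq_meas).aestronglyMeasurable 1 ?_
      intro ν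
      by_cases h : q ν = 0
      · simp [h, hq_nonneg ν]
      · rw [abs_mul, abs_of_nonneg (hq_nonneg ν)]
        refine mul_le_mul_of_nonneg_right ?_ (hq_nonneg ν)
        exact (hebound ν (hq_suppB ν h)).trans hDβ
    have h_rq : Integrable (fun ν => (Real.exp (e ν) - 1 - e ν) * q ν) := by
      have h1 : (fun ν => (Real.exp (e ν) - 1 - e ν) * q ν)
          = fun ν => Real.exp (e ν) * q ν - q ν - e ν * q ν := funext fun ν => by ring
      rw [h1]
      exact (h_expq.sub hq_int).sub h_eq
    -- the split of H
    have hH : Hfun q α x = ∫ ν, Real.exp (e ν) * q ν := rfl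
    have hsplit : Hfun q α x
        = 1 + ((∫ ν, e ν * q ν) + ∫ ν, (Real.exp (e ν) - 1 - e ν) * q ν) := by
      rw [hH]
      have h1 : (fun ν => Real.exp (e ν) * q ν)
          = fun ν => q ν + (e ν * q ν + (Real.exp (e ν) - 1 - e ν) * q ν) :=
        funext fun ν => by ring
      have h_sum : Integrable (fun ν => e ν * q ν + (Real.exp (e ν) - 1 - e ν) * q ν) :=
        h_eq.add h_rq
      have i1 : ∫ ν, (q ν + (e ν * q ν + (Real.exp (e ν) - 1 - e ν) * q ν))
          = (∫ ν, q ν) + ∫ ν, (e ν * q ν + (Real.exp (e ν) - 1 - e ν) * q ν) :=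
        integral_add hq_int h_sum
      have i2 : ∫ ν, (e ν * q ν + (Real.exp (e ν) - 1 - e ν) * q ν)
          = (∫ ν, e ν * q ν) + ∫ ν, (Real.exp (e ν) - 1 - e ν) * q ν :=
        integral_add h_eq h_rq
      rw [h1, i1, i2, hq_one]
    -- value of ∫ e q
    have heqval : ∫ ν, e ν * q ν
        = (-(1/(2*α^2))*(1-α)^2) * M2 + ((1/(2*α^2))*(2*(1-α)*x)) * M1 := by
      have h1 : (fun ν => e ν * q ν)
          = fun ν => (-(1/(2*α^2))*(1-α)^2) * (ν^2 * q ν)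
            + ((1/(2*α^2))*(2*(1-α)*x)) * (ν * q ν) := funext fun ν => by rw [hedef]; ring
      have j1 : Integrable (fun ν => (-(1/(2*α^2))*(1-α)^2) * (ν^2 * q ν)) :=
        hν2q_int.const_mul _
      have j2 : Integrable (fun ν => ((1/(2*α^2))*(2*(1-α)*x)) * (ν * q ν)) :=
        hνq_int.const_mul _
      have i3 : ∫ ν, ((-(1/(2*α^2))*(1-α)^2) * (ν^2 * q ν)
            + ((1/(2*α^2))*(2*(1-α)*x)) * (ν * q ν))
          = (∫ ν, (-(1/(2*α^2))*(1-α)^2) * (ν^2 * q ν))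
            + ∫ ν, ((1/(2*α^2))*(2*(1-α)*x)) * (ν * q ν) := integral_add j1 j2
      rw [h1, i3, integral_const_mul, integral_const_mul, hM2def, hM1def]
    -- bound on remainder R
    have hR : |∫ ν, (Real.exp (e ν) - 1 - e ν) * q ν| ≤ (D*(1-α))^2 := by
      have hpt : ∀ ν, ‖(Real.exp (e ν) - 1 - e ν) * q ν‖ ≤ (D*(1-α))^2 * q ν := by
        intro ν
        by_cases h : q ν = 0
        · simp [h, sq_nonneg (D*(1-α))]
        · rw [Real.norm_eq_abs, abs_mul, abs_of_nonneg (hq_nonneg ν)]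
          refine mul_le_mul_of_nonneg_right ?_ (hq_nonneg ν)
          have hb1 := hebound ν (hq_suppB ν h)
          have hexp := Real.abs_exp_sub_one_sub_id_le (hb1.trans hDβ)
          refine hexp.trans ?_
          calc (e ν)^2 = |e ν|^2 := (sq_abs _).symm
            _ ≤ (D*(1-α))^2 := pow_le_pow_left₀ (abs_nonneg _) hb1 2
      calc |∫ ν, (Real.exp (e ν) - 1 - e ν) * q ν|
          ≤ ∫ ν, (D*(1-α))^2 * q ν :=
            norm_integral_le_of_norm_le (hq_int.const_mul _) (ae_of_all _ hpt)
        _ = (D*(1-α))^2 := by rw [integral_const_mul, hq_one, mul_one]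
    set R : ℝ := ∫ ν, (Real.exp (e ν) - 1 - e ν) * q ν with hRdef
    set u : ℝ := (∫ ν, e ν * q ν) + R with hudef
    clear_value R u
    -- bound on u
    have hc2 : |(-(1/(2*α^2))*(1-α)^2) * M2| ≤ 2*(1-α)^2*M2 := by
      rw [abs_mul, neg_mul, abs_neg, abs_mul, abs_of_pos hinvpos,
        abs_of_nonneg (sq_nonneg (1-α)), abs_of_nonneg hM2_nonneg]
      exact aux_c2 hinv (sq_nonneg (1-α)) hM2_nonneg
    have hcM1 : |((1/(2*α^2))*(2*(1-α)*x)) * M1| ≤ 4*(1-α)*C*|M1| := by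
      rw [abs_mul, abs_mul, abs_of_pos hinvpos]
      have h1 : |2*(1-α)*x| ≤ 2*(1-α)*C := by
        rw [abs_mul, abs_of_nonneg (by positivity : (0:ℝ) ≤ 2*(1-α))]
        exact mul_le_mul_of_nonneg_left hx (by positivity)
      have h2 : (1/(2*α^2)) * |2*(1-α)*x| ≤ 2 * (2*(1-α)*C) :=
        mul_le_mul hinv h1 (abs_nonneg _) (by norm_num)
      calc 1/(2*α^2) * |2*(1-α)*x| * |M1| ≤ (2 * (2*(1-α)*C)) * |M1| :=
            mul_le_mul_of_nonneg_right h2 (abs_nonneg _)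
        _ = 4*(1-α)*C*|M1| := by ring
    have hu_abs : |u| ≤ K3 * (1-α) := by
      rw [hudef, heqval]
      calc |(-(1/(2*α^2))*(1-α)^2) * M2 + ((1/(2*α^2))*(2*(1-α)*x)) * M1 + R|
          ≤ |(-(1/(2*α^2))*(1-α)^2) * M2| + |((1/(2*α^2))*(2*(1-α)*x)) * M1| + |R| := by
            refine (abs_add_le _ _).trans ?_
            exact add_le_add_left (abs_add_le _ _) _
        _ ≤ 2*(1-α)^2*M2 + 4*(1-α)*C*|M1| + (D*(1-α))^2 := by
            exact add_le_add (add_le_add hc2 hcM1) hR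
        _ ≤ K3 * (1-α) := by
            rw [hK3def]
            exact auxK3 hβpos hβ1 hM2_nonneg
    have hu_half : |u| ≤ 1/2 := hu_abs.trans hK3β
    have hHu : Hfun q α x = 1 + u := by rw [hsplit, hudef]
    -- log estimate
    have hlog : |Real.log (Hfun q α x) - u| ≤ 2*u^2 := by
      rw [hHu]; exact log_one_add_near hu_half
    -- coefficient estimate
    have hcoef : |((1/(2*α^2))*(2*(1-α)*x)) - (1-α)*x| ≤ 8*(1-α)^2*C := by
      have hid : ((1/(2*α^2))*(2*(1-α)*x)) - (1-α)*x = ((1-α)*x) * ((1-α)*(1+α)/α^2) := by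
        field_simp
        ring
      rw [hid, abs_mul]
      have h1 : |(1-α)*x| ≤ (1-α)*C := by
        rw [abs_mul, abs_of_pos hβpos]
        exact mul_le_mul_of_nonneg_left hx hβpos.le
      have h2 : |(1-α)*(1+α)/α^2| ≤ 8*(1-α) := by
        rw [abs_of_nonneg (by positivity), div_le_iff₀ (by positivity)]
        exact aux_alpha hαhalf hα1
      calc |(1-α)*x| * |(1-α)*(1+α)/α^2| ≤ ((1-α)*C) * (8*(1-α)) := by
            exact mul_le_mul h1 h2 (abs_nonneg _) (by positivity)
        _ = 8*(1-α)^2*C := by ring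
    -- assemble
    have hfinal : |Real.log (Hfun q α x) - (1-α)*x*M1|
        ≤ 2*u^2 + (2*(1-α)^2*M2 + 8*(1-α)^2*C*|M1| + (D*(1-α))^2) := by
      have hdecomp : Real.log (Hfun q α x) - (1-α)*x*M1
          = (Real.log (Hfun q α x) - u)
            + ((-(1/(2*α^2))*(1-α)^2) * M2
              + (((1/(2*α^2))*(2*(1-α)*x)) - (1-α)*x) * M1 + R) := by
        rw [hudef, heqval]; ring
      rw [hdecomp]
      have h3 : |(((1/(2*α^2))*(2*(1-α)*x)) - (1-α)*x) * M1| ≤ 8*(1-α)^2*C*|M1| := by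
        rw [abs_mul]
        calc |((1/(2*α^2))*(2*(1-α)*x)) - (1-α)*x| * |M1| ≤ (8*(1-α)^2*C) * |M1| :=
              mul_le_mul_of_nonneg_right hcoef (abs_nonneg _)
          _ = 8*(1-α)^2*C*|M1| := by ring
      calc |(Real.log (Hfun q α x) - u)
            + ((-(1/(2*α^2))*(1-α)^2) * M2
              + (((1/(2*α^2))*(2*(1-α)*x)) - (1-α)*x) * M1 + R)|
          ≤ |Real.log (Hfun q α x) - u|
            + (|(-(1/(2*α^2))*(1-α)^2) * M2|
              + |(((1/(2*α^2))*(2*(1-α)*x)) - (1-α)*x) * M1| + |R|) := by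
            refine (abs_add_le _ _).trans ?_
            refine add_le_add_right ((abs_add_le _ _).trans (add_le_add_left (abs_add_le _ _) _)) _
        _ ≤ 2*u^2 + (2*(1-α)^2*M2 + 8*(1-α)^2*C*|M1| + (D*(1-α))^2) := by
            exact add_le_add hlog (add_le_add (add_le_add hc2 h3) hR)
    refine hfinal.trans ?_
    have hu2 : u^2 ≤ (K3*(1-α))^2 := by
      calc u^2 = |u|^2 := (sq_abs _).symm
        _ ≤ (K3*(1-α))^2 := pow_le_pow_left₀ (abs_nonneg _) hu_abs 2
    rw [hK4def]
    exact auxK4 hu2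
  -- now the filter argument
  have hEv : ∀ᶠ α in nhdsWithin (1:ℝ) (Set.Iio 1),
      ‖(Ffun q pT α - (α - 1) * (M1 * P1)) / (α - 1)‖ ≤ K4 * (1-α) := by
    have hmem : Set.Ioo (max (1/2) (1-δ)) 1 ∈ nhdsWithin (1:ℝ) (Set.Iio 1) := by
      refine Ioo_mem_nhdsLT_of_mem ⟨?_, le_rfl⟩
      exact max_lt (by norm_num) (by linarith)
    filter_upwards [hmem] with α hα
    have hαhalf : 1/2 < α := lt_of_le_of_lt (le_max_left _ _) hα.1
    have hα1 : α < 1 := hα.2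
    have hαδ : 1 - α ≤ δ := by
      have := lt_of_le_of_lt (le_max_right _ _) hα.1
      linarith
    have hβpos : 0 < 1 - α := by linarith
    -- integrability of pT · log H
    have hpTlog_int : Integrable (fun x => pT x * Real.log (Hfun q α x)) := by
      refine integrable_of_le_density hpT_int
        (hpT_meas.mul (Real.measurable_log.comp (Hfun_measurable q hq_meas α))).aestronglyMeasurable
        (K4*(1-α)^2 + (1-α)*C*|M1|) ?_
      intro x
      by_cases h : pT x = 0
      · simp [h]
      · rw [abs_mul, abs_of_nonneg (hpT_nonneg x), mul_comm]
        refine mul_le_mul_of_nonneg_right ?_ (hpT_nonneg x)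
        have hk := key α hαhalf hα1 hαδ x (hpT_suppC x h)
        have h2 : |(1-α)*x*M1| ≤ (1-α)*C*|M1| := by
          rw [abs_mul, abs_mul, abs_of_pos hβpos]
          refine mul_le_mul_of_nonneg_right ?_ (abs_nonneg _)
          exact mul_le_mul_of_nonneg_left (hpT_suppC x h) hβpos.le
        calc |Real.log (Hfun q α x)|
            ≤ |Real.log (Hfun q α x) - (1-α)*x*M1| + |(1-α)*x*M1| := by
              have := abs_add_le (Real.log (Hfun q α x) - (1-α)*x*M1) ((1-α)*x*M1)
              simpa using this
          _ ≤ K4*(1-α)^2 + (1-α)*C*|M1| := add_le_add hk h2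
    -- rewrite the numerator
    have heqn : Ffun q pT α - (α - 1) * (M1 * P1)
        = -∫ x, pT x * (Real.log (Hfun q α x) - (1-α)*x*M1) := by
      have h1 : (fun x => pT x * (Real.log (Hfun q α x) - (1-α)*x*M1))
          = fun x => pT x * Real.log (Hfun q α x) - ((1-α)*M1) * (x * pT x) :=
        funext fun x => by ring
      rw [h1, integral_sub hpTlog_int (hxpT_int.const_mul _), integral_const_mul, ← hP1def]
      simp only [Ffun]
      ring
    -- bound the numerator
    have hnum : |Ffun q pT α - (α - 1) * (M1 * P1)| ≤ K4*(1-α)^2 := by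
      rw [heqn, abs_neg]
      have hpt : ∀ x, ‖pT x * (Real.log (Hfun q α x) - (1-α)*x*M1)‖ ≤ (K4*(1-α)^2) * pT x := by
        intro x
        by_cases h : pT x = 0
        · simp [h]
        · rw [Real.norm_eq_abs, abs_mul, abs_of_nonneg (hpT_nonneg x), mul_comm]
          exact mul_le_mul_of_nonneg_right (key α hαhalf hα1 hαδ x (hpT_suppC x h))
            (hpT_nonneg x)
      calc |∫ x, pT x * (Real.log (Hfun q α x) - (1-α)*x*M1)|
          ≤ ∫ x, (K4*(1-α)^2) * pT x :=
            norm_integral_le_of_norm_le (hpT_int.const_mul _) (ae_of_all _ hpt)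
        _ = K4*(1-α)^2 := by rw [integral_const_mul, hpT_one, mul_one]
    rw [Real.norm_eq_abs, abs_div, abs_of_neg (by linarith : α - 1 < 0)]
    rw [div_le_iff₀ (by linarith : (0:ℝ) < -(α-1))]
    calc |Ffun q pT α - (α - 1) * (M1 * P1)| ≤ K4*(1-α)^2 := hnum
      _ = K4 * (1-α) * -(α-1) := by ring
  have hg : Tendsto (fun α : ℝ => K4 * (1-α)) (nhdsWithin (1:ℝ) (Set.Iio 1)) (nhds 0) := by
    have h0 : Tendsto (fun α : ℝ => K4 * (1-α)) (nhds 1) (nhds (K4 * (1-1))) :=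
      tendsto_const_nhds.mul (tendsto_const_nhds.sub tendsto_id)
    have h1 := h0.mono_left (nhdsWithin_le_nhds (s := Set.Iio 1))
    simpa using h1
  exact squeeze_zero_norm' hEv hg
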